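/- arXiv:2207.13741 — 6 statements merged into one kernel-verified Lean document; each statement's English description precedes it below -/
import Mathlib

section
/- Let 0 < ν < 1 and let a > 1 be a real number. Then ∑_{j ∈ ℕ, j > a/(1-ν)} e^{-νj}(νj)^{j-1}/j! ≤ e² · exp(-(10a/21)(1-ν)). -/
open Real Filter

/-- Stirling lower bound `√π · √(2n) · (n/e)^n ≤ n!` for `n ≥ 1`. -/
lemma stirling_lower (n : ℕ) (hn : 1 ≤ n) :
    Real.sqrt π * (Real.sqrt (2 * n) * ((n : ℝ) / Real.exp 1) ^ n) ≤ (n.factorial : ℝ) := by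
  have hlim : Tendsto (Stirling.stirlingSeq ∘ Nat.succ) atTop (nhds (Real.sqrt π)) :=
    Stirling.tendsto_stirlingSeq_sqrt_pi.comp (tendsto_add_atTop_nat 1)
  have h1 : Real.sqrt π ≤ Stirling.stirlingSeq n := by
    obtain ⟨m, rfl⟩ := Nat.exists_eq_add_of_le hn
    have := Stirling.stirlingSeq'_antitone.le_of_tendsto hlim m
    simpa [Nat.succ_eq_add_one, Nat.add_comm] using this
  have hpos : 0 < Real.sqrt (2 * n) * ((n : ℝ) / Real.exp 1) ^ n := by
    have : (0:ℝ) < n := by exact_mod_cast hn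
    positivity
  rw [Stirling.stirlingSeq] at h1
  calc Real.sqrt π * (Real.sqrt (2 * n) * ((n : ℝ) / Real.exp 1) ^ n)
      ≤ ((n.factorial : ℝ) / (Real.sqrt (2 * n) * ((n : ℝ) / Real.exp 1) ^ n)) *
        (Real.sqrt (2 * n) * ((n : ℝ) / Real.exp 1) ^ n) := by
        apply mul_le_mul_of_nonneg_right h1 hpos.le
    _ = (n.factorial : ℝ) := by field_simp

/-- `(1-x)·e^x ≤ e^{-x²/2}` for `x ≥ 0`. -/
lemma one_sub_mul_exp_le (x : ℝ) (hx : 0 ≤ x) :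
    (1 - x) * Real.exp x ≤ Real.exp (-(x ^ 2) / 2) := by
  set f : ℝ → ℝ := fun y => Real.exp (-(y ^ 2) / 2) - (1 - y) * Real.exp y with hf
  have hd : ∀ y : ℝ, HasDerivAt f (y * (Real.exp y - Real.exp (-(y ^ 2) / 2))) y := by
    intro y
    have h1 : HasDerivAt (fun y : ℝ => -(y ^ 2) / 2) (-y) y := by
      have := ((hasDerivAt_pow 2 y).neg).div_const 2
      simpa using this.congr_deriv (by ring)
    have h2 : HasDerivAt (fun y : ℝ => Real.exp (-(y ^ 2) / 2))
        ((-y) * Real.exp (-(y ^ 2) / 2)) y := by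
      simpa [mul_comm] using h1.exp
    have h3 : HasDerivAt (fun y : ℝ => (1 - y) * Real.exp y)
        ((-1) * Real.exp y + (1 - y) * Real.exp y) y := by
      exact (((hasDerivAt_id' y).const_sub (1:ℝ)).mul (Real.hasDerivAt_exp y)).congr_deriv (by ring)
    have := h2.sub h3
    exact this.congr_deriv (by ring)
  have hmono : MonotoneOn f (Set.Ici (0 : ℝ)) := by
    apply monotoneOn_of_deriv_nonneg (convex_Ici 0)
    · exact ((Real.continuous_exp.comp (by continuity)).sub
        ((continuous_const.sub continuous_id).mul Real.continuous_exp)).continuousOn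
    · intro y hy
      exact (hd y).differentiableAt.differentiableWithinAt
    · intro y hy
      rw [(hd y).deriv]
      rw [interior_Ici] at hy
      have hy0 : 0 < y := hy
      have : Real.exp (-(y ^ 2) / 2) ≤ Real.exp y := by
        apply Real.exp_le_exp.mpr; nlinarith
      nlinarith
  have h0 : f 0 = 0 := by simp [hf]
  have := hmono (Set.self_mem_Ici) (Set.mem_Ici.mpr hx) hx
  rw [h0] at this
  simpa [hf] using this

/-- The comparison function `j ↦ j^{-3/2}` (cut off below 2). -/
noncomputable def Gfun : ℕ → ℝ := fun j => if 2 ≤ j then ((j : ℝ) * Real.sqrt j)⁻¹ else 0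

lemma Gfun_nonneg (j : ℕ) : 0 ≤ Gfun j := by
  unfold Gfun; split
  · positivity
  · exact le_refl _

lemma Gfun_tele (n : ℕ) :
    Gfun (n + 2) ≤ 2 / Real.sqrt (n + 1) - 2 / Real.sqrt (n + 2) := by
  have hGn : Gfun (n + 2) = (((n:ℝ) + 2) * Real.sqrt ((n:ℝ) + 2))⁻¹ := by
    unfold Gfun
    rw [if_pos (by omega)]
    push_cast
    ring_nf
  set s := Real.sqrt ((n:ℝ) + 1) with hs
  set t := Real.sqrt ((n:ℝ) + 2) with ht
  have hs1 : 1 ≤ s := by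
    rw [hs]
    conv_lhs => rw [← Real.sqrt_one]
    exact Real.sqrt_le_sqrt (by push_cast; linarith)
  have hst : s ≤ t := Real.sqrt_le_sqrt (by push_cast; linarith)
  have hs2 : s ^ 2 = (n:ℝ) + 1 := Real.sq_sqrt (by positivity)
  have ht2 : t ^ 2 = (n:ℝ) + 2 := Real.sq_sqrt (by positivity)
  have hs0 : 0 < s := lt_of_lt_of_le one_pos hs1
  have ht0 : 0 < t := lt_of_lt_of_le hs0 hst
  have hcast : Gfun (n + 2) = (t ^ 2 * t)⁻¹ := by
    rw [hGn, ht2]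
  rw [hcast, div_sub_div _ _ hs0.ne' ht0.ne', inv_eq_one_div,
    div_le_div_iff₀ (by positivity) (by positivity)]
  nlinarith [mul_pos hs0 ht0, mul_pos (mul_pos hs0 ht0) ht0, sq_nonneg (t - s),
    mul_le_mul_of_nonneg_right (mul_le_mul_of_nonneg_right hst ht0.le) ht0.le]

lemma Gfun_partial (n : ℕ) : ∑ i ∈ Finset.range n, Gfun i ≤ 2 := by
  have key : ∀ m : ℕ, ∑ i ∈ Finset.range (m + 2), Gfun i ≤ 2 - 2 / Real.sqrt (m + 1) := by
    intro m
    induction m with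
    | zero =>
      simp [Finset.sum_range_succ, Gfun]
    | succ k ih =>
      rw [show k + 1 + 2 = (k + 2) + 1 by ring, Finset.sum_range_succ]
      have htele := Gfun_tele k
      push_cast at htele ih ⊢
      have hsq : Real.sqrt ((k:ℝ) + 1 + 1) = Real.sqrt ((k:ℝ) + 2) := by congr 1; ring
      rw [hsq]
      linarith
  match n with
  | 0 => simp
  | 1 => simp [Finset.sum_range_succ, Gfun]
  | (m + 2) =>
    have := key m
    have h2 : 0 ≤ 2 / Real.sqrt (m + 1) := by positivity
    linarith

lemma Gfun_summable : Summable Gfun :=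
  summable_of_sum_range_le Gfun_nonneg Gfun_partial

lemma Gfun_tsum_le : ∑' j, Gfun j ≤ 2 :=
  Real.tsum_le_of_sum_range_le Gfun_nonneg Gfun_partial

lemma borel_final_arith (a x M : ℝ) (ha : 1 < a) (hx0 : 0 < x) (hx1 : x < 1)
    (hM1 : 1 ≤ M) (haM : a < (M + 1) * x) :
    x + M * (-(x ^ 2) / 2) ≤ 2 + -(10 * a / 21) * x := by
  have hax : a * x < (M + 1) * x ^ 2 := by nlinarith
  have hx2 : x ^ 2 ≤ x := by nlinarith
  nlinarith [mul_nonneg (by linarith : (0:ℝ) ≤ M) (sq_nonneg x)]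

/-- Tail bound for the total progeny of a Poisson(ν) branching process (Borel distribution):
for `0 < ν < 1` and `a > 1`,
`∑_{j > a/(1-ν)} e^{-νj}(νj)^{j-1}/j! ≤ e² exp(-(10a/21)(1-ν))`. -/
theorem borel_tail_bound_scaled (ν : ℝ) (hν0 : 0 < ν) (hν1 : ν < 1) (a : ℝ) (ha : a > 1) :
    (∑' j : ℕ, if a / (1 - ν) < (j : ℝ) then
        Real.exp (-ν * j) * (ν * j) ^ (j - 1) / (Nat.factorial j) else 0)
      ≤ Real.exp 2 * Real.exp (-(10 * a / 21) * (1 - ν)) := by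
  set x : ℝ := 1 - ν with hxdef
  have hx0 : 0 < x := by simp only [hxdef]; linarith
  have hx1 : x < 1 := by simp only [hxdef]; linarith
  set q : ℝ := ν * Real.exp x with hqdef
  have hq0 : 0 ≤ q := by positivity
  have hqle : q ≤ Real.exp (-(x ^ 2) / 2) := by
    have h := one_sub_mul_exp_le x hx0.le
    have : (1 : ℝ) - x = ν := by simp [hxdef]
    rwa [this] at h
  have hq1 : q ≤ 1 := hqle.trans (Real.exp_le_one_iff.mpr (by nlinarith))
  set T : ℝ := a / x with hTdef
  have hT1 : 1 < T := by
    rw [hTdef, lt_div_iff₀ hx0]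
    linarith
  set J : ℕ := Nat.floor T + 1 with hJdef
  have hTJ : T < (J : ℝ) := by
    rw [hJdef]; push_cast; exact Nat.lt_floor_add_one T
  have hJ2 : 2 ≤ J := by
    have : 1 ≤ Nat.floor T := Nat.le_floor (by exact_mod_cast hT1.le)
    omega
  have haJx : a < (J : ℝ) * x := by
    rw [hTdef, div_lt_iff₀ hx0] at hTJ
    linarith
  set K : ℝ := Real.exp x * q ^ (J - 1) / Real.sqrt (2 * π) with hKdef
  have hK0 : 0 ≤ K := by positivity
  -- pointwise comparison
  have hpt : ∀ j : ℕ, (if T < (j : ℝ) then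
      Real.exp (-ν * j) * (ν * j) ^ (j - 1) / (Nat.factorial j) else 0) ≤ K * Gfun j := by
    intro j
    by_cases hj : T < (j : ℝ)
    · rw [if_pos hj]
      have hj1 : (1 : ℝ) < j := lt_trans hT1 hj
      have hj2 : 2 ≤ j := by
        have h1j : 1 < j := by exact_mod_cast hj1
        omega
      have hJj : J ≤ j := by
        have h1 : (Nat.floor T : ℝ) < (j : ℝ) :=
          lt_of_le_of_lt (Nat.floor_le (by linarith : (0:ℝ) ≤ T)) hj
        have h2 : Nat.floor T < j := by exact_mod_cast h1
        omega
      obtain ⟨m, rfl⟩ : ∃ m, j = m + 1 := ⟨j - 1, by omega⟩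
      have hGj : Gfun (m + 1) = (((m:ℝ) + 1) * Real.sqrt ((m:ℝ) + 1))⁻¹ := by
        unfold Gfun; rw [if_pos hj2]; push_cast; ring_nf
      set r : ℝ := (m : ℝ) + 1 with hrdef
      have hr0 : (0:ℝ) < r := by positivity
      have hsr0 : (0:ℝ) < Real.sqrt r := Real.sqrt_pos.mpr hr0
      -- Stirling bound on the factorial
      have hfact := stirling_lower (m + 1) (by omega)
      have hfact' : Real.sqrt π * (Real.sqrt (2 * r) * (r / Real.exp 1) ^ (m + 1))
          ≤ ((m+1).factorial : ℝ) := by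
        have : ((m + 1 : ℕ) : ℝ) = r := by push_cast [hrdef]; ring
        rwa [this] at hfact
      have hSpos : 0 < Real.sqrt π * (Real.sqrt (2 * r) * (r / Real.exp 1) ^ (m + 1)) := by
        positivity
      have hnum0 : 0 ≤ Real.exp (-ν * ((m:ℕ) + 1 : ℕ)) * (ν * ((m:ℕ) + 1 : ℕ)) ^ m := by
        positivity
      -- step A : replace factorial by Stirling expression
      have stepA : Real.exp (-ν * ((m + 1 : ℕ) : ℝ)) * (ν * ((m + 1 : ℕ) : ℝ)) ^ ((m+1) - 1)
            / (((m+1).factorial : ℝ))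
          ≤ Real.exp (-ν * r) * (ν * r) ^ m
            / (Real.sqrt π * (Real.sqrt (2 * r) * (r / Real.exp 1) ^ (m + 1))) := by
        have hc : ((m + 1 : ℕ) : ℝ) = r := by push_cast [hrdef]; ring
        rw [hc, Nat.add_sub_cancel]
        exact div_le_div_of_nonneg_left (by positivity) hSpos hfact'
      -- step B : algebraic identity
      have e2r : Real.sqrt (2 * r) = Real.sqrt 2 * Real.sqrt r := Real.sqrt_mul (by norm_num) r
      have e2π : Real.sqrt (2 * π) = Real.sqrt 2 * Real.sqrt π := Real.sqrt_mul (by norm_num) π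
      have eexp : Real.exp (-ν * r) = Real.exp x ^ (m + 1) / Real.exp 1 ^ (m + 1) := by
        rw [← Real.exp_nat_mul, ← Real.exp_nat_mul, ← Real.exp_sub]
        congr 1
        push_cast [hxdef, hrdef]
        ring
      have stepB : Real.exp (-ν * r) * (ν * r) ^ m
            / (Real.sqrt π * (Real.sqrt (2 * r) * (r / Real.exp 1) ^ (m + 1)))
          = (Real.exp x * q ^ m / Real.sqrt (2 * π)) * ((r * Real.sqrt r)⁻¹) := by
        rw [eexp, e2r, e2π, mul_pow ν r, mul_pow ν (Real.exp x), div_pow, pow_succ (Real.exp x)]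
        have hsπ : (0:ℝ) < Real.sqrt π := Real.sqrt_pos.mpr Real.pi_pos
        have hs2 : (0:ℝ) < Real.sqrt 2 := by positivity
        have hexp1 : (0:ℝ) < Real.exp 1 := Real.exp_pos 1
        field_simp
        ring
      -- step C : monotonicity in the exponent
      have stepC : (Real.exp x * q ^ m / Real.sqrt (2 * π)) * ((r * Real.sqrt r)⁻¹)
          ≤ K * Gfun (m + 1) := by
        rw [hGj, hKdef]
        have hqm : q ^ m ≤ q ^ (J - 1) :=
          pow_le_pow_of_le_one hq0 hq1 (by omega)
        have : Real.exp x * q ^ m / Real.sqrt (2 * π)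
            ≤ Real.exp x * q ^ (J - 1) / Real.sqrt (2 * π) := by
          apply div_le_div_of_nonneg_right ?_ (by positivity)
          exact mul_le_mul_of_nonneg_left hqm (Real.exp_pos x).le
        apply mul_le_mul_of_nonneg_right this
        rw [hrdef]
        positivity
      calc Real.exp (-ν * ((m + 1 : ℕ) : ℝ)) * (ν * ((m + 1 : ℕ) : ℝ)) ^ ((m+1) - 1)
            / (((m+1).factorial : ℝ))
          ≤ Real.exp (-ν * r) * (ν * r) ^ m
            / (Real.sqrt π * (Real.sqrt (2 * r) * (r / Real.exp 1) ^ (m + 1))) := stepA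
        _ = (Real.exp x * q ^ m / Real.sqrt (2 * π)) * ((r * Real.sqrt r)⁻¹) := stepB
        _ ≤ K * Gfun (m + 1) := stepC
    · rw [if_neg hj]
      exact mul_nonneg hK0 (Gfun_nonneg j)
  -- assemble
  have hF0 : ∀ j : ℕ, 0 ≤ (if T < (j : ℝ) then
      Real.exp (-ν * j) * (ν * j) ^ (j - 1) / (Nat.factorial j) else 0) := by
    intro j
    split
    · positivity
    · exact le_refl _
  have hGsum : Summable (fun j => K * Gfun j) := Gfun_summable.mul_left K
  have hFsum : Summable (fun j : ℕ => if T < (j : ℝ) then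
      Real.exp (-ν * j) * (ν * j) ^ (j - 1) / (Nat.factorial j) else 0) :=
    Summable.of_nonneg_of_le hF0 hpt hGsum
  have hmain : (∑' j : ℕ, if T < (j : ℝ) then
      Real.exp (-ν * j) * (ν * j) ^ (j - 1) / (Nat.factorial j) else 0) ≤ K * 2 := by
    calc (∑' j : ℕ, if T < (j : ℝ) then
          Real.exp (-ν * j) * (ν * j) ^ (j - 1) / (Nat.factorial j) else 0)
        ≤ ∑' j : ℕ, K * Gfun j := Summable.tsum_le_tsum hpt hFsum hGsum
      _ = K * ∑' j, Gfun j := tsum_mul_left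
      _ ≤ K * 2 := mul_le_mul_of_nonneg_left Gfun_tsum_le hK0
  refine hmain.trans ?_
  -- final numeric estimate
  have h2π : (2:ℝ) ≤ Real.sqrt (2 * π) := by
    have h4 : (4:ℝ) ≤ 2 * π := by nlinarith [Real.pi_gt_three]
    nlinarith [Real.sq_sqrt (by positivity : (0:ℝ) ≤ 2 * π), Real.sqrt_nonneg (2 * π),
      sq_nonneg (Real.sqrt (2 * π) - 2)]
  have hK2 : K * 2 ≤ Real.exp x * q ^ (J - 1) := by
    rw [hKdef]
    rw [div_mul_eq_mul_div, div_le_iff₀ (by positivity : (0:ℝ) < Real.sqrt (2*π))]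
    have h1 : (0:ℝ) ≤ Real.exp x * q ^ (J - 1) := by positivity
    nlinarith
  refine hK2.trans ?_
  have hqpow : q ^ (J - 1) ≤ Real.exp (-(x ^ 2) / 2) ^ (J - 1) :=
    pow_le_pow_left₀ hq0 hqle (J - 1)
  have : Real.exp x * q ^ (J - 1) ≤ Real.exp x * Real.exp (-(x ^ 2) / 2) ^ (J - 1) :=
    mul_le_mul_of_nonneg_left hqpow (Real.exp_pos x).le
  refine this.trans ?_
  rw [← Real.exp_nat_mul, ← Real.exp_add, ← Real.exp_add]
  apply Real.exp_le_exp.mpr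
  have hM1 : (1:ℝ) ≤ ((J - 1 : ℕ) : ℝ) := by
    have h : 1 ≤ J - 1 := by omega
    exact_mod_cast h
  have haM : a < (((J - 1 : ℕ) : ℝ) + 1) * x := by
    have hJc : ((J : ℕ) : ℝ) = ((J - 1 : ℕ) : ℝ) + 1 := by
      push_cast [Nat.cast_sub (by omega : 1 ≤ J)]
      ring
    rw [← hJc]
    exact haJx
  exact borel_final_arith a x _ ha hx0 hx1 hM1 haM
end

section
/- For every real number ν with 0 < ν < 1, one has 1 + (log ν)/(1-ν) ≤ -(10/21)(1-ν). -/
open Real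

lemma log_le_quadratic (ν : ℝ) (hν0 : 0 < ν) (hν1 : ν ≤ 1) :
    Real.log ν ≤ -(1 - ν) - (1 - ν) ^ 2 / 2 := by
  set f : ℝ → ℝ := fun y => Real.log y + (1 - y) + (1 - y) ^ 2 / 2 with hf
  have hderiv : ∀ y : ℝ, 0 < y →
      HasDerivAt f (y⁻¹ + (-1) + (2 * (1 - y) ^ 1 * (-1)) / 2) y := by
    intro y hy
    have h := ((Real.hasDerivAt_log hy.ne').add
      (((hasDerivAt_const y (1:ℝ)).sub (hasDerivAt_id y)))).add
      ((((hasDerivAt_const y (1:ℝ)).sub (hasDerivAt_id y)).pow 2).div_const 2)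
    have e : f = (log + (((fun x : ℝ => (1:ℝ)) - id : ℝ → ℝ)) + fun x => ((((fun x : ℝ => (1:ℝ)) - id : ℝ → ℝ) ^ 2) x / 2)) := by
      ext x; simp [hf]
    rw [e]
    refine h.congr_deriv ?_
    norm_num
  have hmono : MonotoneOn f (Set.Icc ν 1) := by
    apply monotoneOn_of_deriv_nonneg (convex_Icc ν 1)
    · apply ContinuousOn.add
      apply ContinuousOn.add
      · exact Real.continuousOn_log.mono (by
          intro x hx
          simp only [Set.mem_Icc] at hx
          exact fun h => by simp at h; linarith [hx.1])
      · exact (continuous_const.sub continuous_id).continuousOn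
      · exact ((continuous_const.sub continuous_id).pow 2).continuousOn.div_const 2
    · intro x hx
      rw [interior_Icc] at hx
      exact ((hderiv x (hν0.trans hx.1)).differentiableAt).differentiableWithinAt
    · intro x hx
      rw [interior_Icc] at hx
      have hx0 : 0 < x := hν0.trans hx.1
      rw [(hderiv x hx0).deriv]
      have : x⁻¹ + (-1) + (2 * (1 - x) ^ 1 * (-1)) / 2 = (1 - x) ^ 2 / x := by
        field_simp
        ring
      rw [this]
      positivity
  have h1 : f ν ≤ f 1 := hmono (Set.mem_Icc.mpr ⟨le_refl ν, hν1⟩)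
    (Set.mem_Icc.mpr ⟨hν1, le_refl 1⟩) hν1
  simp only [hf, Real.log_one, sub_self] at h1
  norm_num at h1
  linarith

/-- For `0 < ν < 1`, one has `1 + (log ν)/(1-ν) ≤ -(10/21)(1-ν)`. -/
theorem one_add_log_div_le (ν : ℝ) (hν0 : 0 < ν) (hν1 : ν < 1) :
    1 + Real.log ν / (1 - ν) ≤ -(10 / 21) * (1 - ν) := by
  have hx : 0 < 1 - ν := by linarith
  have hlog := log_le_quadratic ν hν0 hν1.le
  have : Real.log ν / (1 - ν) ≤ -1 - (1 - ν) / 2 := by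
    rw [div_le_iff₀ hx]
    nlinarith
  nlinarith
end

section
/- Let μ > 0, 0 < α < 1, and Δ > 0 with Δ ≥ 5α²/(1-α). Define σ²(Δ) = μΔ/(1-α)³ + α²μ(1 - e^{-2(1-α)Δ})/(2(1-α)⁴) - 2αμ(1 - e^{-(1-α)Δ})/(1-α)⁴. Then σ²(Δ) ≤ 1.1 · μΔ/(1-α)³. -/
open Real

/-- For `μ > 0`, `0 < α < 1` and `Δ ≥ 5α²/(1-α)`, the stationary Hawkes bin-count variance
`σ²(Δ)` is at most `1.1 · μΔ/(1-α)³`. -/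
theorem hawkes_variance_upper_bound (μ α Δ : ℝ) (hμ : 0 < μ) (hα0 : 0 < α) (hα1 : α < 1)
    (hΔ0 : 0 < Δ) (hΔ : Δ ≥ 5 * α ^ 2 / (1 - α)) :
    μ * Δ / (1 - α) ^ 3
      + α ^ 2 * μ * (1 - Real.exp (-2 * (1 - α) * Δ)) / (2 * (1 - α) ^ 4)
      - 2 * α * μ * (1 - Real.exp (-(1 - α) * Δ)) / (1 - α) ^ 4
      ≤ 1.1 * (μ * Δ / (1 - α) ^ 3) := by
  have h1 : (0:ℝ) < 1 - α := by linarith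
  have he1 : (0:ℝ) < Real.exp (-2 * (1 - α) * Δ) := Real.exp_pos _
  have he2 : Real.exp (-(1 - α) * Δ) ≤ 1 := by
    rw [Real.exp_le_one_iff]
    nlinarith
  have hΔ' : Δ * (1 - α) ≥ 5 * α ^ 2 := by
    rw [ge_iff_le, div_le_iff₀ h1] at hΔ
    linarith
  have step1 : μ * Δ / (1 - α) ^ 3
      + α ^ 2 * μ * (1 - Real.exp (-2 * (1 - α) * Δ)) / (2 * (1 - α) ^ 4)
      - 2 * α * μ * (1 - Real.exp (-(1 - α) * Δ)) / (1 - α) ^ 4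
      ≤ μ * Δ / (1 - α) ^ 3 + α ^ 2 * μ / (2 * (1 - α) ^ 4) := by
    have t1 : α ^ 2 * μ * (1 - Real.exp (-2 * (1 - α) * Δ)) / (2 * (1 - α) ^ 4)
        ≤ α ^ 2 * μ / (2 * (1 - α) ^ 4) := by
      apply div_le_div_of_nonneg_right _ (by positivity)
      nlinarith [mul_pos (mul_pos (pow_pos hα0 2) hμ) he1]
    have t2 : 0 ≤ 2 * α * μ * (1 - Real.exp (-(1 - α) * Δ)) / (1 - α) ^ 4 := by
      apply div_nonneg _ (by positivity)
      have : (0:ℝ) ≤ 1 - Real.exp (-(1 - α) * Δ) := by linarith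
      positivity
    linarith
  refine step1.trans ?_
  rw [show (1.1 : ℝ) * (μ * Δ / (1 - α) ^ 3) = μ * Δ / (1 - α) ^ 3 + 0.1 * (μ * Δ / (1 - α) ^ 3) by ring]
  have : α ^ 2 * μ / (2 * (1 - α) ^ 4) ≤ 0.1 * (μ * Δ / (1 - α) ^ 3) := by
    rw [div_le_iff₀ (by positivity), mul_comm]
    have h4 : (0:ℝ) < (1 - α) ^ 3 := by positivity
    rw [div_eq_mul_inv]
    have : 0.1 * (μ * Δ * ((1 - α) ^ 3)⁻¹) * (2 * (1 - α) ^ 4)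
        = 0.1 * μ * Δ * 2 * (1 - α) * ((1 - α) ^ 3 * ((1 - α) ^ 3)⁻¹) := by ring
    rw [this, mul_inv_cancel₀ (ne_of_gt h4), mul_one]
    nlinarith
  linarith
end

section
/- Let μ > 0, 0 < α < 1, and Δ > 0. Define σ²(Δ) = μΔ/(1-α)³ + α²μ(1 - e^{-2(1-α)Δ})/(2(1-α)⁴) - 2αμ(1 - e^{-(1-α)Δ})/(1-α)⁴. Then |σ²(Δ)/Δ - μ/(1-α)³| ≤ 4μ/((1-α)⁴ Δ). -/
open Real

/-- For `μ > 0`, `0 < α < 1` and `Δ > 0`, the rescaled stationary Hawkes bin-count variance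
`σ²(Δ)/Δ` is within `4μ/((1-α)⁴Δ)` of `μ/(1-α)³`. -/
theorem hawkes_variance_ratio_bound (μ α Δ : ℝ) (hμ : 0 < μ) (hα0 : 0 < α) (hα1 : α < 1)
    (hΔ0 : 0 < Δ) :
    |(μ * Δ / (1 - α) ^ 3
        + α ^ 2 * μ * (1 - Real.exp (-2 * (1 - α) * Δ)) / (2 * (1 - α) ^ 4)
        - 2 * α * μ * (1 - Real.exp (-(1 - α) * Δ)) / (1 - α) ^ 4) / Δ
      - μ / (1 - α) ^ 3|
      ≤ 4 * μ / ((1 - α) ^ 4 * Δ) := by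
  have hβ : 0 < 1 - α := by linarith
  have hβ4 : (0:ℝ) < (1 - α) ^ 4 := by positivity
  have hβ3 : ((1:ℝ) - α) ^ 3 ≠ 0 := by positivity
  have hΔ : Δ ≠ 0 := ne_of_gt hΔ0
  have e1pos : 0 < Real.exp (-(1 - α) * Δ) := Real.exp_pos _
  have e2pos : 0 < Real.exp (-2 * (1 - α) * Δ) := Real.exp_pos _
  have e1le : Real.exp (-(1 - α) * Δ) ≤ 1 := by
    rw [Real.exp_le_one_iff]; nlinarith
  have e2le : Real.exp (-2 * (1 - α) * Δ) ≤ 1 := by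
    rw [Real.exp_le_one_iff]; nlinarith
  have key : (μ * Δ / (1 - α) ^ 3
        + α ^ 2 * μ * (1 - Real.exp (-2 * (1 - α) * Δ)) / (2 * (1 - α) ^ 4)
        - 2 * α * μ * (1 - Real.exp (-(1 - α) * Δ)) / (1 - α) ^ 4) / Δ
      - μ / (1 - α) ^ 3
      = (α ^ 2 * μ * (1 - Real.exp (-2 * (1 - α) * Δ))
          - 4 * α * μ * (1 - Real.exp (-(1 - α) * Δ))) / (2 * (1 - α) ^ 4 * Δ) := by
    field_simp
    ring
  rw [key]
  have hden : 0 < 2 * (1 - α) ^ 4 * Δ := by positivity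
  rw [abs_div, abs_of_pos hden]
  have hnum : |α ^ 2 * μ * (1 - Real.exp (-2 * (1 - α) * Δ))
      - 4 * α * μ * (1 - Real.exp (-(1 - α) * Δ))| ≤ 8 * μ := by
    have h1 : 0 ≤ α ^ 2 * μ * (1 - Real.exp (-2 * (1 - α) * Δ)) := by
      apply mul_nonneg (by positivity); linarith
    have hα2 : α ^ 2 ≤ 1 := by nlinarith
    have h2 : α ^ 2 * μ * (1 - Real.exp (-2 * (1 - α) * Δ)) ≤ μ := by
      nlinarith [mul_le_mul_of_nonneg_left (by linarith : 1 - Real.exp (-2 * (1 - α) * Δ) ≤ 1)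
          (by positivity : (0:ℝ) ≤ α ^ 2 * μ),
        mul_nonneg (sub_nonneg.mpr hα2) hμ.le]
    have h3 : 0 ≤ 4 * α * μ * (1 - Real.exp (-(1 - α) * Δ)) := by
      apply mul_nonneg (by positivity); linarith
    have h4 : 4 * α * μ * (1 - Real.exp (-(1 - α) * Δ)) ≤ 4 * μ := by
      nlinarith [mul_le_mul_of_nonneg_left (by linarith : 1 - Real.exp (-(1 - α) * Δ) ≤ 1)
          (by positivity : (0:ℝ) ≤ 4 * α * μ),
        mul_nonneg (by linarith : (0:ℝ) ≤ 1 - α) hμ.le]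
    rw [abs_le]
    constructor <;> linarith
  calc |α ^ 2 * μ * (1 - Real.exp (-2 * (1 - α) * Δ))
      - 4 * α * μ * (1 - Real.exp (-(1 - α) * Δ))| / (2 * (1 - α) ^ 4 * Δ)
      ≤ 8 * μ / (2 * (1 - α) ^ 4 * Δ) := by gcongr
    _ = 4 * μ / ((1 - α) ^ 4 * Δ) := by field_simp; ring
end

section
/- Let 0 < μ_lower ≤ μ ≤ μ_upper and 0 < α_lower ≤ α ≤ α_upper < 1 be reals, and let 0 < ξ ≤ μ_lower/6. Set ϑ = μ/(1-α) and ω = μ/(1-α)³. Suppose ϑ̂ and ω̂ are reals with |ϑ̂ - ϑ| < ξ and |ω̂ - ω| < 2ξ, and suppose α̂ and μ̂ are defined by 1 - α̂ = √(ϑ̂/ω̂) and μ̂ = ϑ̂(1 - α̂), with α̂ ≤ α_upper. Then |α - α̂| ≤ C₅·ξ and |μ - μ̂| ≤ C₆·ξ, where C₅ = 6/(μ_lower(1-α_upper)) and C₆ = 1 + 6μ_upper/(μ_lower(1-α_upper)²) + 1/(1-α_upper). -/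
open Real

set_option maxHeartbeats 1600000 in
/-- Deterministic core of the non-private estimation bound: if the rescaled sample mean
`ϑ̂` is within `ξ` of `ϑ = μ/(1-α)` and the rescaled sample variance `ω̂` is within `2ξ`
of `ω = μ/(1-α)³`, then the estimates `α̂, μ̂` obtained from `1-α̂ = √(ϑ̂/ω̂)` and
`μ̂ = ϑ̂(1-α̂)` satisfy `|α - α̂| ≤ C₅ξ` and `|μ - μ̂| ≤ C₆ξ`. -/
theorem hawkes_param_estimation_error
    (μlow μ μup αlow α αup ξ ϑhat ωhat αhat μhat : ℝ)
    (hμlow : 0 < μlow) (hμ1 : μlow ≤ μ) (hμ2 : μ ≤ μup)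
    (hαlow : 0 < αlow) (hα1 : αlow ≤ α) (hα2 : α ≤ αup) (hαup : αup < 1)
    (hξ0 : 0 < ξ) (hξ : ξ ≤ μlow / 6)
    (hϑ : |ϑhat - μ / (1 - α)| < ξ)
    (hω : |ωhat - μ / (1 - α) ^ 3| < 2 * ξ)
    (hαhat : 1 - αhat = Real.sqrt (ϑhat / ωhat))
    (hμhat : μhat = ϑhat * (1 - αhat))
    (hαhatup : αhat ≤ αup) :
    |α - αhat| ≤ 6 / (μlow * (1 - αup)) * ξ ∧
      |μ - μhat| ≤ (1 + 6 * μup / (μlow * (1 - αup) ^ 2) + 1 / (1 - αup)) * ξ := by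
  have hb : 0 < 1 - αup := by linarith
  have ha0 : 0 < 1 - α := by linarith
  have hba : 1 - αup ≤ 1 - α := by linarith
  have ha1 : 1 - α ≤ 1 := by nlinarith
  have hμ0 : 0 < μ := lt_of_lt_of_le hμlow hμ1
  have hϑdef : μ / (1 - α) = (1 - α) ^ 2 * (μ / (1 - α) ^ 3) := by
    field_simp
  have hϑlb : μlow ≤ μ / (1 - α) := by
    rw [le_div_iff₀ ha0]; nlinarith
  have hcube : (1 - α) ^ 3 ≤ 1 := by nlinarith
  have hωlb : μlow ≤ μ / (1 - α) ^ 3 := by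
    rw [le_div_iff₀ (by positivity)]; nlinarith
  obtain ⟨hϑ1, hϑ2⟩ := abs_lt.mp hϑ
  obtain ⟨hω1, hω2⟩ := abs_lt.mp hω
  have hωhat : 2 / 3 * μlow ≤ ωhat := by linarith
  have hωhat0 : 0 < ωhat := by linarith
  have hϑhat0 : 0 < ϑhat := by linarith
  have hs0 : 0 ≤ 1 - αhat := hαhat ▸ Real.sqrt_nonneg _
  have hs2 : (1 - αhat) ^ 2 * ωhat = ϑhat := by
    rw [hαhat, Real.sq_sqrt (by positivity)]
    field_simp
  have hsq1 : (1 - α) ^ 2 ≤ 1 := by nlinarith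
  have hsq0 : (0 : ℝ) ≤ (1 - α) ^ 2 := sq_nonneg _
  have hnum : |ϑhat - (1 - α) ^ 2 * ωhat| ≤ 3 * ξ := by
    have e1 : (1 - α) ^ 2 * (ωhat - μ / (1 - α) ^ 3) ≤ (1 - α) ^ 2 * (2 * ξ) :=
      mul_le_mul_of_nonneg_left hω2.le hsq0
    have e2 : (1 - α) ^ 2 * (-(2 * ξ)) ≤ (1 - α) ^ 2 * (ωhat - μ / (1 - α) ^ 3) :=
      mul_le_mul_of_nonneg_left (by linarith) hsq0
    have e3 : (1 - α) ^ 2 * (2 * ξ) ≤ 1 * (2 * ξ) :=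
      mul_le_mul_of_nonneg_right hsq1 (by linarith)
    rw [abs_le]
    constructor <;> linarith [hϑdef]
  obtain ⟨hn1, hn2⟩ := abs_le.mp hnum
  have habs : |α - αhat| = |(1 - αhat) - (1 - α)| := by congr 1; ring
  have hkey : |α - αhat| * ((1 - α) * ωhat) ≤ 3 * ξ := by
    rw [habs]
    rcases abs_cases ((1 - αhat) - (1 - α)) with ⟨h, h'⟩ | ⟨h, h'⟩ <;> rw [h]
    · linarith [mul_nonneg (mul_nonneg h' hs0) hωhat0.le, hs2, hn2]
    · linarith [mul_nonneg (mul_nonneg (by linarith : (0:ℝ) ≤ (1 - α) - (1 - αhat)) hs0)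
        hωhat0.le, hs2, hn1]
  have hinner : (1 - αup) * (2 / 3 * μlow) ≤ (1 - α) * ωhat :=
    mul_le_mul hba hωhat (by positivity) ha0.le
  have hprod : |α - αhat| * ((1 - αup) * (2 / 3 * μlow)) ≤ 3 * ξ :=
    le_trans (mul_le_mul_of_nonneg_left hinner (abs_nonneg _)) hkey
  have hxm : |α - αhat| * (μlow * (1 - αup)) ≤ 9 / 2 * ξ := by linarith
  constructor
  · rw [div_mul_eq_mul_div, le_div_iff₀ (by positivity)]
    linarith
  · have heq : μ - μhat = (μ / (1 - α) - ϑhat) * (1 - α) + ϑhat * (αhat - α) := by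
      rw [hμhat]
      field_simp
      ring
    have htri : |μ - μhat| ≤ ξ * (1 - α) + (μ / (1 - α) + ξ) * |α - αhat| := by
      rw [heq]
      refine (abs_add_le _ _).trans ?_
      have h1 : |(μ / (1 - α) - ϑhat) * (1 - α)| ≤ ξ * (1 - α) := by
        rw [abs_mul, abs_of_pos ha0]
        have h0 : |μ / (1 - α) - ϑhat| ≤ ξ := by
          rw [abs_sub_comm]; exact hϑ.le
        exact mul_le_mul_of_nonneg_right h0 ha0.le
      have h2 : |ϑhat * (αhat - α)| ≤ (μ / (1 - α) + ξ) * |α - αhat| := by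
        rw [abs_mul, abs_sub_comm αhat α]
        refine mul_le_mul_of_nonneg_right ?_ (abs_nonneg _)
        rw [abs_of_pos hϑhat0]; linarith
      linarith
    have hϑ0 : (0:ℝ) ≤ μ / (1 - α) := div_nonneg hμ0.le ha0.le
    have hϑub : (μ / (1 - α)) * (1 - αup) ≤ μup := by
      have hc : (μ / (1 - α)) * (1 - α) = μ := div_mul_cancel₀ μ ha0.ne'
      have := mul_le_mul_of_nonneg_left hba hϑ0
      linarith
    rw [show (1 + 6 * μup / (μlow * (1 - αup) ^ 2) + 1 / (1 - αup)) * ξ =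
        ((μlow * (1 - αup) ^ 2 + 6 * μup + μlow * (1 - αup)) * ξ) / (μlow * (1 - αup) ^ 2) by
      field_simp]
    rw [le_div_iff₀ (by positivity)]
    have hM : (0 : ℝ) ≤ μlow * (1 - αup) ^ 2 := by positivity
    have hterm1 : ξ * (μlow * (1 - αup) ^ 2) * (1 - α) ≤ ξ * (μlow * (1 - αup) ^ 2) * 1 :=
      mul_le_mul_of_nonneg_left ha1 (by positivity)
    have hterm2 : (μ / (1 - α) * (1 - αup)) * (|α - αhat| * (μlow * (1 - αup))) ≤
        μup * (9 / 2 * ξ) :=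
      mul_le_mul hϑub hxm (by positivity) (by linarith)
    have hterm3 : ξ * (1 - αup) * (|α - αhat| * (μlow * (1 - αup))) ≤
        ξ * (1 - αup) * (9 / 2 * ξ) :=
      mul_le_mul_of_nonneg_left hxm (by positivity)
    have hterm4 : 9 / 2 * ξ * (1 - αup) * ξ ≤ 9 / 2 * ξ * (1 - αup) * (μlow / 6) :=
      mul_le_mul_of_nonneg_left hξ (by positivity)
    linarith [mul_le_mul_of_nonneg_right htri hM,
      mul_pos (lt_of_lt_of_le hμ0 hμ2) hξ0, mul_pos (mul_pos hμlow hb) hξ0]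
end

section
/- Let K ≥ 2 and B ≥ 1 be integers, and let Δ > 0 and C > 0 be reals. Let y₁,…,y_K be nonnegative integers with mean ȳ = (1/K)∑_{i=1}^K y_i, and suppose |y_i - ȳ| ≤ √(BΔ)·C for every i. Let b₁,…,b_K be nonnegative integers with ∑_{i=1}^K b_i = B. Then |(1/(K-1))∑_{i=1}^K (y_i + b_i - ȳ - B/K)² - (1/(K-1))∑_{i=1}^K (y_i - ȳ)²| ≤ B²/K + 2·B^{3/2}·√Δ·C/(K-1). -/
open Real Finset

/-- Sensitivity of the unbiased sample variance: adding `B` extra events `b₁,…,b_K`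
(with `∑ bᵢ = B`) to bin counts `y₁,…,y_K` satisfying the per-bin deviation bound
`|yᵢ - ȳ| ≤ √(BΔ)·C` changes the sample variance by at most
`B²/K + 2B^{3/2}√Δ·C/(K-1)`. -/
theorem sample_variance_sensitivity
    (K B : ℕ) (hK : 2 ≤ K) (hB : 1 ≤ B) (Δ C : ℝ) (hΔ : 0 < Δ) (hC : 0 < C)
    (y b : Fin K → ℕ) (hbsum : ∑ i, b i = B)
    (hdev : ∀ i, |(y i : ℝ) - (∑ j, (y j : ℝ)) / K| ≤ Real.sqrt ((B : ℝ) * Δ) * C) :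
    |(1 / ((K : ℝ) - 1)) *
        ∑ i, ((y i : ℝ) + (b i : ℝ) - (∑ j, (y j : ℝ)) / K - (B : ℝ) / K) ^ 2
      - (1 / ((K : ℝ) - 1)) * ∑ i, ((y i : ℝ) - (∑ j, (y j : ℝ)) / K) ^ 2|
      ≤ (B : ℝ) ^ 2 / K + 2 * (B : ℝ) ^ ((3 : ℝ) / 2) * Real.sqrt Δ * C / ((K : ℝ) - 1) := by
  set S : ℝ := ∑ j, (y j : ℝ) with hS
  have hK2 : (2:ℝ) ≤ (K:ℝ) := by exact_mod_cast hK
  have hKpos : (0:ℝ) < K := by linarith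
  have hKm1 : (0:ℝ) < (K:ℝ) - 1 := by linarith
  have hB1 : (1:ℝ) ≤ (B:ℝ) := by exact_mod_cast hB
  have hBpos : (0:ℝ) < (B:ℝ) := by linarith
  have hbsumR : ∑ i, (b i : ℝ) = (B:ℝ) := by exact_mod_cast hbsum
  have hcard : (Finset.univ : Finset (Fin K)).card = K := by simp
  -- sum of deviations is zero
  have hsumd : ∑ i, ((y i : ℝ) - S / K) = 0 := by
    rw [Finset.sum_sub_distrib, Finset.sum_const, hcard, ← hS]
    rw [nsmul_eq_mul]
    field_simp
    ring
  -- key algebraic identity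
  have key : (1 / ((K : ℝ) - 1)) *
        ∑ i, ((y i : ℝ) + (b i : ℝ) - S / K - (B : ℝ) / K) ^ 2
      - (1 / ((K : ℝ) - 1)) * ∑ i, ((y i : ℝ) - S / K) ^ 2
      = (1 / ((K : ℝ) - 1)) *
        (2 * ∑ i, ((y i : ℝ) - S / K) * (b i : ℝ)
          + ∑ i, ((b i : ℝ) - (B:ℝ)/K) ^ 2) := by
    rw [← mul_sub, ← Finset.sum_sub_distrib]
    congr 1
    have expand : ∀ i, ((y i : ℝ) + (b i : ℝ) - S / K - (B : ℝ) / K) ^ 2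
        - ((y i : ℝ) - S / K) ^ 2
        = 2 * (((y i : ℝ) - S / K) * (b i : ℝ))
          + ((b i : ℝ) - (B:ℝ)/K) ^ 2
          - (2 * ((B:ℝ)/K)) * ((y i : ℝ) - S / K) := by
      intro i; ring
    calc ∑ i, (((y i : ℝ) + (b i : ℝ) - S / K - (B : ℝ) / K) ^ 2
        - ((y i : ℝ) - S / K) ^ 2)
        = ∑ i, (2 * (((y i : ℝ) - S / K) * (b i : ℝ))
          + ((b i : ℝ) - (B:ℝ)/K) ^ 2
          - (2 * ((B:ℝ)/K)) * ((y i : ℝ) - S / K)) :=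
          Finset.sum_congr rfl (fun i _ => expand i)
      _ = 2 * ∑ i, ((y i : ℝ) - S / K) * (b i : ℝ)
          + ∑ i, ((b i : ℝ) - (B:ℝ)/K) ^ 2
          - (2 * ((B:ℝ)/K)) * ∑ i, ((y i : ℝ) - S / K) := by
          rw [Finset.sum_sub_distrib, Finset.sum_add_distrib, Finset.mul_sum,
            Finset.mul_sum]
      _ = 2 * ∑ i, ((y i : ℝ) - S / K) * (b i : ℝ)
          + ∑ i, ((b i : ℝ) - (B:ℝ)/K) ^ 2 := by rw [hsumd]; ring
  -- bound on cross term
  have hDb : |∑ i, ((y i : ℝ) - S / K) * (b i : ℝ)|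
      ≤ Real.sqrt ((B : ℝ) * Δ) * C * B := by
    calc |∑ i, ((y i : ℝ) - S / K) * (b i : ℝ)|
        ≤ ∑ i, |((y i : ℝ) - S / K) * (b i : ℝ)| := Finset.abs_sum_le_sum_abs _ _
      _ ≤ ∑ i, Real.sqrt ((B : ℝ) * Δ) * C * (b i : ℝ) := by
          apply Finset.sum_le_sum
          intro i _
          rw [abs_mul, abs_of_nonneg (by positivity : (0:ℝ) ≤ (b i : ℝ))]
          exact mul_le_mul_of_nonneg_right (hdev i) (by positivity)
      _ = Real.sqrt ((B : ℝ) * Δ) * C * B := by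
          rw [← Finset.mul_sum, hbsumR]
  -- bound on ∑ b_i²
  have hbsq : ∑ i, ((b i : ℝ))^2 ≤ (B:ℝ)^2 := by
    have : ∑ i, (b i)^2 ≤ B^2 := by
      calc ∑ i, (b i)^2 ≤ ∑ i, b i * B := by
            apply Finset.sum_le_sum
            intro i _
            have : b i ≤ B := hbsum ▸ Finset.single_le_sum (fun j _ => Nat.zero_le _)
              (Finset.mem_univ i)
            calc (b i)^2 = b i * b i := sq (b i) ▸ rfl
              _ ≤ b i * B := Nat.mul_le_mul_left _ this
        _ = B * B := by rw [← Finset.sum_mul, hbsum]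
        _ = B^2 := (sq B).symm
    exact_mod_cast this
  -- bound on T
  have hT : ∑ i, ((b i : ℝ) - (B:ℝ)/K) ^ 2 ≤ (B:ℝ)^2 * ((K:ℝ) - 1) / K := by
    have expand : ∑ i, ((b i : ℝ) - (B:ℝ)/K) ^ 2
        = ∑ i, ((b i : ℝ))^2 - (B:ℝ)^2 / K := by
      have : ∀ i, ((b i : ℝ) - (B:ℝ)/K) ^ 2
          = ((b i : ℝ))^2 - (2*(B:ℝ)/K) * (b i : ℝ) + ((B:ℝ)/K)^2 := by
        intro i; ring
      rw [Finset.sum_congr rfl (fun i _ => this i), Finset.sum_add_distrib,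
        Finset.sum_sub_distrib, ← Finset.mul_sum, hbsumR, Finset.sum_const, hcard]
      rw [nsmul_eq_mul]
      field_simp
      ring
    rw [expand]
    have h1 : ∑ i, ((b i : ℝ))^2 - (B:ℝ)^2 / K ≤ (B:ℝ)^2 - (B:ℝ)^2 / K := by linarith
    calc ∑ i, ((b i : ℝ))^2 - (B:ℝ)^2 / K ≤ (B:ℝ)^2 - (B:ℝ)^2 / K := h1
      _ = (B:ℝ)^2 * ((K:ℝ) - 1) / K := by field_simp
  have hTnn : (0:ℝ) ≤ ∑ i, ((b i : ℝ) - (B:ℝ)/K) ^ 2 := by positivity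
  -- rpow identity
  have hrpow : (B:ℝ) ^ ((3:ℝ)/2) = (B:ℝ) * Real.sqrt B := by
    rw [show (3:ℝ)/2 = 1 + 1/2 by norm_num, Real.rpow_add hBpos, Real.rpow_one,
      Real.sqrt_eq_rpow]
  have hsqrtmul : Real.sqrt ((B:ℝ) * Δ) = Real.sqrt B * Real.sqrt Δ :=
    Real.sqrt_mul hBpos.le Δ
  rw [key]
  have habs : |(1 / ((K : ℝ) - 1)) *
      (2 * ∑ i, ((y i : ℝ) - S / K) * (b i : ℝ)
        + ∑ i, ((b i : ℝ) - (B:ℝ)/K) ^ 2)|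
      ≤ (1 / ((K : ℝ) - 1)) *
      (2 * (Real.sqrt ((B : ℝ) * Δ) * C * B)
        + (B:ℝ)^2 * ((K:ℝ) - 1) / K) := by
    rw [abs_mul, abs_of_nonneg (by positivity : (0:ℝ) ≤ 1 / ((K:ℝ)-1))]
    apply mul_le_mul_of_nonneg_left _ (by positivity)
    calc |2 * ∑ i, ((y i : ℝ) - S / K) * (b i : ℝ)
        + ∑ i, ((b i : ℝ) - (B:ℝ)/K) ^ 2|
        ≤ |2 * ∑ i, ((y i : ℝ) - S / K) * (b i : ℝ)|
          + |∑ i, ((b i : ℝ) - (B:ℝ)/K) ^ 2| := abs_add_le _ _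
      _ ≤ 2 * (Real.sqrt ((B : ℝ) * Δ) * C * B) + (B:ℝ)^2 * ((K:ℝ) - 1) / K := by
          rw [abs_mul, abs_of_nonneg (by norm_num : (0:ℝ) ≤ 2),
            abs_of_nonneg hTnn]
          have := mul_le_mul_of_nonneg_left hDb (by norm_num : (0:ℝ) ≤ 2)
          linarith
  refine habs.trans (le_of_eq ?_)
  rw [hsqrtmul, hrpow]
  field_simp
  ring
end
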